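/- Let H be a complex Hilbert space with dim H ≥ 2 and let (Tₙ) be a sequence of nonzero bounded linear operators on H with ε̂(Tₙ) → 0. Then dist(Tₙ/‖Tₙ‖, 𝒱) → 0, where 𝒱 is the set of linear isometries on H and dist(A, 𝒱) = inf{‖A − V‖ : V ∈ 𝒱}. -/

import Mathlib

open scoped ComplexInnerProductSpace

noncomputable section

variable {H : Type*} [NormedAddCommGroup H] [InnerProductSpace ℂ H] [CompleteSpace H]

/-- `T` is `ε`-approximately orthogonality preserving: orthogonal vectors are mapped to
`ε`-orthogonal vectors. -/
def IsAOP (T : H →L[ℂ] H) (ε : ℝ) : Prop :=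
  ∀ x y : H, ⟪x, y⟫ = 0 → ‖⟪T x, T y⟫‖ ≤ ε * (‖T x‖ * ‖T y‖)

/-- `ε̂(T)`, the smallest `ε ∈ [0,1]` for which `T` is `ε`-AOP. -/
def epsHat (T : H →L[ℂ] H) : ℝ :=
  sInf {ε : ℝ | 0 ≤ ε ∧ ε ≤ 1 ∧ IsAOP T ε}

/-- The minimum modulus `m(T) = inf {‖T x‖ : ‖x‖ = 1}`. -/
def minMod (T : H →L[ℂ] H) : ℝ :=
  sInf {r : ℝ | ∃ x : H, ‖x‖ = 1 ∧ ‖T x‖ = r}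

/-- The set `ℂ𝒱` of scalar multiples of linear isometries of `H`. -/
def scalarIsoms (H : Type*) [NormedAddCommGroup H] [InnerProductSpace ℂ H] :
    Set (H →L[ℂ] H) :=
  {S | ∃ (c : ℂ) (V : H →L[ℂ] H), (∀ x : H, ‖V x‖ = ‖x‖) ∧ S = c • V}

/-- `dist(T, ℂ𝒱)`. -/
def distCV (T : H →L[ℂ] H) : ℝ := Metric.infDist T (scalarIsoms H)

/-- The set `𝒱` of linear isometries of `H`. -/
def isoms (H : Type*) [NormedAddCommGroup H] [InnerProductSpace ℂ H] :
    Set (H →L[ℂ] H) :=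
  {V | ∀ x : H, ‖V x‖ = ‖x‖}

/-- `dist(T, 𝒱)`. -/
def distV (T : H →L[ℂ] H) : ℝ := Metric.infDist T (isoms H)


set_option linter.unusedSectionVars false
set_option maxHeartbeats 1000000

section AuxLemmas

variable {H : Type*} [NormedAddCommGroup H] [InnerProductSpace ℂ H] [CompleteSpace H]

lemma stepA (T : H →L[ℂ] H) (ε : ℝ) (hT : IsAOP T ε) (hε : 0 ≤ ε) (x z : H)
    (hx : ‖x‖ = 1) (hz : ‖z‖ = 1) (hxz : ⟪x, z⟫ = 0) :
    ‖T x‖ ^ 2 - 2 * ε * (‖T x‖ + ‖T z‖) ^ 2 ≤ ‖T z‖ ^ 2 := by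
  have hzx : ⟪z, x⟫ = 0 := by rw [← inner_conj_symm, hxz, map_zero]
  have horth : ⟪x + z, x - z⟫ = 0 := by
    rw [inner_add_left, inner_sub_right, inner_sub_right, hxz, hzx,
      inner_self_eq_norm_sq_to_K, inner_self_eq_norm_sq_to_K, hx, hz]
    ring
  have h1 := hT _ _ horth
  have h2 := hT x z hxz
  have h3 := hT z x hzx
  have identity : ((‖T x‖ ^ 2 - ‖T z‖ ^ 2 : ℝ) : ℂ)
      = ⟪T (x + z), T (x - z)⟫ + ⟪T x, T z⟫ - ⟪T z, T x⟫ := by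
    rw [map_add, map_sub, inner_add_left, inner_sub_right, inner_sub_right,
      inner_self_eq_norm_sq_to_K, inner_self_eq_norm_sq_to_K]
    push_cast
    ring_nf
    rfl
  have habs : |‖T x‖ ^ 2 - ‖T z‖ ^ 2| ≤ ε * (‖T (x + z)‖ * ‖T (x - z)‖) + ε * (‖T x‖ * ‖T z‖) + ε * (‖T z‖ * ‖T x‖) := by
    calc |‖T x‖ ^ 2 - ‖T z‖ ^ 2| = ‖((‖T x‖ ^ 2 - ‖T z‖ ^ 2 : ℝ) : ℂ)‖ := by
          rw [Complex.norm_real, Real.norm_eq_abs]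
      _ = ‖⟪T (x + z), T (x - z)⟫ + ⟪T x, T z⟫ - ⟪T z, T x⟫‖ := by rw [identity]
      _ ≤ ‖⟪T (x + z), T (x - z)⟫ + ⟪T x, T z⟫‖ + ‖⟪T z, T x⟫‖ := norm_sub_le _ _
      _ ≤ ‖⟪T (x + z), T (x - z)⟫‖ + ‖⟪T x, T z⟫‖ + ‖⟪T z, T x⟫‖ := by
          have := norm_add_le (⟪T (x + z), T (x - z)⟫ : ℂ) ⟪T x, T z⟫
          linarith
      _ ≤ ε * (‖T (x + z)‖ * ‖T (x - z)‖) + ε * (‖T x‖ * ‖T z‖) + ε * (‖T z‖ * ‖T x‖) := by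
          linarith
  have hu : ‖T (x + z)‖ ≤ ‖T x‖ + ‖T z‖ := by rw [map_add]; exact norm_add_le _ _
  have hv : ‖T (x - z)‖ ≤ ‖T x‖ + ‖T z‖ := by rw [map_sub]; exact norm_sub_le _ _
  have ha0 : 0 ≤ ‖T x‖ := norm_nonneg _
  have hb0 : 0 ≤ ‖T z‖ := norm_nonneg _
  have habs2 : |‖T x‖ ^ 2 - ‖T z‖ ^ 2| ≤ 2 * ε * (‖T x‖ + ‖T z‖) ^ 2 := by
    have hm : ε * (‖T (x + z)‖ * ‖T (x - z)‖) ≤ ε * ((‖T x‖ + ‖T z‖) * (‖T x‖ + ‖T z‖)) := by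
      apply mul_le_mul_of_nonneg_left _ hε
      exact mul_le_mul hu hv (norm_nonneg _) (by linarith)
    nlinarith [sq_nonneg (‖T x‖ - ‖T z‖)]
  have := abs_le.mp habs2
  linarith [this.1]

set_option linter.unusedSectionVars false

lemma arith {e g a c M r R : ℝ} (he : 0 ≤ e) (ha : 0 ≤ a) (hc : 0 ≤ c)
    (hg0 : 0 ≤ g) (hg1 : g ≤ 1) (haM : a ≤ M)
    (hcM : c ^ 2 ≤ (1 - g ^ 2) * M ^ 2)
    (hlow : (1 - g ^ 2) * (a ^ 2 - 8 * e * M ^ 2) ≤ c ^ 2)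
    (hr : -(g * (e * (a * c))) ≤ r)
    (hR : R = g ^ 2 * a ^ 2 + 2 * r + c ^ 2) :
    a ^ 2 - 9 * e * M ^ 2 ≤ R := by
  have hM0 : 0 ≤ M := le_trans ha haM
  have hg2 : 0 ≤ 1 - g ^ 2 := by nlinarith
  have ha2 : a ^ 2 ≤ M ^ 2 := by nlinarith
  have hP : g ^ 2 * a ^ 2 + c ^ 2 ≤ M ^ 2 := by
    nlinarith [mul_le_mul_of_nonneg_left ha2 (sq_nonneg g)]
  have hQ : a ^ 2 - 8 * e * M ^ 2 ≤ g ^ 2 * a ^ 2 + c ^ 2 := by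
    nlinarith [mul_nonneg (mul_nonneg he (sq_nonneg g)) (sq_nonneg M)]
  have h2 : 2 * (g * a * c) * e ≤ (g ^ 2 * a ^ 2 + c ^ 2) * e :=
    mul_le_mul_of_nonneg_right (by nlinarith [sq_nonneg (g * a - c)]) he
  have h3 : (g ^ 2 * a ^ 2 + c ^ 2) * e ≤ M ^ 2 * e := mul_le_mul_of_nonneg_right hP he
  nlinarith

lemma stepB (T : H →L[ℂ] H) (ε : ℝ) (hT : IsAOP T ε) (hε : 0 ≤ ε)
    (x y : H) (hx : ‖x‖ = 1) (hy : ‖y‖ = 1) :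
    ‖T x‖ ^ 2 - 9 * ε * ‖T‖ ^ 2 ≤ ‖T y‖ ^ 2 := by
  set γ : ℂ := ⟪x, y⟫ with hγ
  set z : H := y - γ • x with hzdef
  have hxz : ⟪x, z⟫ = 0 := by
    rw [hzdef, inner_sub_right, inner_smul_right, inner_self_eq_norm_sq_to_K, hx]
    simp [hγ]
  have hyd : y = γ • x + z := by rw [hzdef]; abel
  have hzn : ‖z‖ ^ 2 = 1 - ‖γ‖ ^ 2 := by
    have hp : ‖γ • x + z‖ ^ 2 = ‖γ • x‖ ^ 2 + 2 * Complex.re ⟪γ • x, z⟫ + ‖z‖ ^ 2 :=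
      norm_add_sq (𝕜 := ℂ) _ _
    have h0 : ⟪γ • x, z⟫ = 0 := by rw [inner_smul_left, hxz, mul_zero]
    rw [h0, ← hyd, hy, norm_smul, hx] at hp
    simp only [Complex.zero_re, mul_zero, add_zero, mul_one, one_pow] at hp
    linarith
  have hγ1 : ‖γ‖ ≤ 1 := by
    have h := norm_inner_le_norm (𝕜 := ℂ) x y
    rw [hx, hy] at h
    simpa using h
  have haM : ‖T x‖ ≤ ‖T‖ := by simpa [hx] using T.le_opNorm x
  have hTy : T y = γ • T x + T z := by rw [hyd, map_add, map_smul]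
  have hexp : ‖T y‖ ^ 2 = ‖γ‖ ^ 2 * ‖T x‖ ^ 2 + 2 * Complex.re ⟪γ • T x, T z⟫ + ‖T z‖ ^ 2 := by
    rw [hTy]
    have h := norm_add_sq (𝕜 := ℂ) (γ • T x) (T z)
    rwa [norm_smul, mul_pow] at h
  have hcross : |Complex.re ⟪γ • T x, T z⟫| ≤ ‖γ‖ * (ε * (‖T x‖ * ‖T z‖)) := by
    calc |Complex.re ⟪γ • T x, T z⟫| ≤ ‖(⟪γ • T x, T z⟫ : ℂ)‖ := Complex.abs_re_le_norm _
      _ = ‖γ‖ * ‖(⟪T x, T z⟫ : ℂ)‖ := by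
          rw [inner_smul_left, norm_mul, RCLike.norm_conj]
      _ ≤ ‖γ‖ * (ε * (‖T x‖ * ‖T z‖)) :=
          mul_le_mul_of_nonneg_left (hT x z hxz) (norm_nonneg _)
  have hzsmall : ‖z‖ ≤ 1 := by
    nlinarith [hzn, sq_nonneg ‖γ‖, norm_nonneg z]
  have hTzsq : ‖T z‖ ^ 2 ≤ (1 - ‖γ‖ ^ 2) * ‖T‖ ^ 2 := by
    have h := T.le_opNorm z
    have : ‖T z‖ ^ 2 ≤ ‖z‖ ^ 2 * ‖T‖ ^ 2 := by
      nlinarith [norm_nonneg (T z), norm_nonneg z, T.opNorm_nonneg]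
    rwa [hzn] at this
  have hTzlow : (1 - ‖γ‖ ^ 2) * (‖T x‖ ^ 2 - 8 * ε * ‖T‖ ^ 2) ≤ ‖T z‖ ^ 2 := by
    rw [← hzn]
    rcases eq_or_ne z 0 with h0 | h0
    · simp [h0]
    · set u : H := ((‖z‖ : ℂ))⁻¹ • z with hu
      have hz0 : (0:ℝ) < ‖z‖ := norm_pos_iff.mpr h0
      have hun : ‖u‖ = 1 := by
        rw [hu, norm_smul]
        simp [norm_inv, hz0.ne']
      have hxu : ⟪x, u⟫ = 0 := by rw [hu, inner_smul_right, hxz, mul_zero]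
      have hTu_le : ‖T u‖ ≤ ‖T‖ := by simpa [hun] using T.le_opNorm u
      have hstep := stepA T ε hT hε x u hx hun hxu
      have h4 : (‖T x‖ + ‖T u‖) ^ 2 ≤ 4 * ‖T‖ ^ 2 := by
        nlinarith [norm_nonneg (T x), norm_nonneg (T u)]
      have h8 : ‖T x‖ ^ 2 - 8 * ε * ‖T‖ ^ 2 ≤ ‖T u‖ ^ 2 := by
        nlinarith [mul_le_mul_of_nonneg_left h4 hε]
      have hzu : T z = (‖z‖ : ℂ) • T u := by
        rw [hu, map_smul, smul_smul]
        rw [mul_inv_cancel₀ (by exact_mod_cast hz0.ne')]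
        simp
      have hTz : ‖T z‖ ^ 2 = ‖z‖ ^ 2 * ‖T u‖ ^ 2 := by
        rw [hzu, norm_smul]
        simp [mul_pow, hz0.le]
      rw [hTz]
      exact mul_le_mul_of_nonneg_left h8 (by positivity)
  have hre : -(‖γ‖ * (ε * (‖T x‖ * ‖T z‖))) ≤ Complex.re ⟪γ • T x, T z⟫ :=
    (abs_le.mp hcross).1
  exact arith hε (norm_nonneg (T x)) (norm_nonneg (T z)) (norm_nonneg γ) hγ1 haM
    hTzsq hTzlow hre hexp


lemma unit_low (T : H →L[ℂ] H) (ε : ℝ) (hT : IsAOP T ε) (hε : 0 ≤ ε) (y : H) (hy : ‖y‖ = 1) :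
    (1 - 9 * ε) * ‖T‖ ^ 2 ≤ ‖T y‖ ^ 2 := by
  set C : ℝ := Real.sqrt (‖T y‖ ^ 2 + 9 * ε * ‖T‖ ^ 2) with hC
  have hC0 : 0 ≤ C := Real.sqrt_nonneg _
  have hCsq : C ^ 2 = ‖T y‖ ^ 2 + 9 * ε * ‖T‖ ^ 2 := Real.sq_sqrt (by positivity)
  have hM : ‖T‖ ≤ C := by
    apply T.opNorm_le_bound hC0
    intro w
    rcases eq_or_ne w 0 with h0 | h0
    · simp [h0]
    · have hw0 : (0:ℝ) < ‖w‖ := norm_pos_iff.mpr h0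
      set w' : H := ((‖w‖ : ℂ))⁻¹ • w with hw'
      have hw1 : ‖w'‖ = 1 := by rw [hw', norm_smul]; simp [hw0.ne']
      have hs := stepB T ε hT hε w' y hw1 hy
      have h1 : ‖T w'‖ ≤ C := by
        rw [← Real.sqrt_sq (norm_nonneg (T w')), hC]
        apply Real.sqrt_le_sqrt
        linarith
      have h2 : T w = (‖w‖ : ℂ) • T w' := by
        rw [hw', map_smul, smul_smul, mul_inv_cancel₀ (by exact_mod_cast hw0.ne')]
        simp
      rw [h2, norm_smul, Complex.norm_real, Real.norm_eq_abs, abs_of_nonneg hw0.le, mul_comm]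
      exact mul_le_mul_of_nonneg_right h1 hw0.le
  have hM2 : ‖T‖ ^ 2 ≤ C ^ 2 := by nlinarith [T.opNorm_nonneg]
  rw [hCsq] at hM2
  linarith

lemma low_all (T : H →L[ℂ] H) (ε : ℝ) (hT : IsAOP T ε) (hε : 0 ≤ ε) (x : H) :
    (1 - 9 * ε) * ‖T‖ ^ 2 * ‖x‖ ^ 2 ≤ ‖T x‖ ^ 2 := by
  rcases eq_or_ne x 0 with h0 | h0
  · simp [h0]
  · have hx0 : (0:ℝ) < ‖x‖ := norm_pos_iff.mpr h0
    set x' : H := ((‖x‖ : ℂ))⁻¹ • x with hx'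
    have hx1 : ‖x'‖ = 1 := by rw [hx', norm_smul]; simp [hx0.ne']
    have hlow := unit_low T ε hT hε x' hx1
    have h2 : T x = (‖x‖ : ℂ) • T x' := by
      rw [hx', map_smul, smul_smul, mul_inv_cancel₀ (by exact_mod_cast hx0.ne')]
      simp
    have h3 : ‖T x‖ ^ 2 = ‖x‖ ^ 2 * ‖T x'‖ ^ 2 := by
      rw [h2, norm_smul, Complex.norm_real, Real.norm_eq_abs, abs_of_nonneg hx0.le, mul_pow]
    rw [h3]
    nlinarith [sq_nonneg ‖x‖]

lemma isAOP_one' (T : H →L[ℂ] H) : IsAOP T 1 := fun x y _ => by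
  simpa using norm_inner_le_norm (𝕜 := ℂ) (T x) (T y)

lemma epsHat_nonneg (T : H →L[ℂ] H) : 0 ≤ epsHat T :=
  le_csInf ⟨1, by norm_num, le_refl 1, isAOP_one' T⟩ fun ε hε => hε.1

lemma isAOP_epsHat (T : H →L[ℂ] H) : IsAOP T (epsHat T) := by
  intro x y hxy
  have hc0 : (0:ℝ) ≤ ‖T x‖ * ‖T y‖ := mul_nonneg (norm_nonneg _) (norm_nonneg _)
  rcases hc0.eq_or_lt with h | h
  · have h1 := isAOP_one' T x y hxy
    rw [← h] at h1
    rw [← h, mul_zero]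
    simpa using h1
  · have hle : ‖(⟪T x, T y⟫ : ℂ)‖ / (‖T x‖ * ‖T y‖) ≤ epsHat T := by
      have hne : ({ε : ℝ | 0 ≤ ε ∧ ε ≤ 1 ∧ IsAOP T ε}).Nonempty :=
        ⟨1, by norm_num, le_refl 1, isAOP_one' T⟩
      apply le_csInf hne
      intro ε hε
      rw [div_le_iff₀ h]
      exact hε.2.2 x y hxy
    have h2 := mul_le_mul_of_nonneg_right hle hc0
    rwa [div_mul_cancel₀ _ (ne_of_gt h)] at h2

open ContinuousLinearMap in
lemma dist_le_aux (S : H →L[ℂ] H) (κ : ℝ) (hκ : 0 < κ) (hκ1 : κ ≤ 1)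
    (hlow : ∀ x : H, κ ^ 2 * ‖x‖ ^ 2 ≤ ‖S x‖ ^ 2) (hup : ∀ x : H, ‖S x‖ ≤ ‖x‖) :
    Metric.infDist S (isoms H) ≤ κ⁻¹ - 1 := by
  set A : H →L[ℂ] H := star S * S with hA
  have hAsa : IsSelfAdjoint A := IsSelfAdjoint.star_mul_self S
  have hinner : ∀ y : H, ⟪y, A y⟫ = ⟪S y, S y⟫ := by
    intro y
    rw [hA, ContinuousLinearMap.mul_apply, star_eq_adjoint, adjoint_inner_right]
  have hupper : A ≤ algebraMap ℝ (H →L[ℂ] H) 1 := by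
    rw [map_one]
    rw [← sub_nonneg, ContinuousLinearMap.nonneg_iff_isPositive]
    constructor
    · exact ContinuousLinearMap.isSelfAdjoint_iff_isSymmetric.mp ((IsSelfAdjoint.one (R := H →L[ℂ] H)).sub hAsa)
    · intro x
      rw [ContinuousLinearMap.reApplyInnerSelf_apply]
      have : ⟪(1 - A) x, x⟫ = ⟪x,x⟫ - ⟪A x, x⟫ := by
        simp [inner_sub_left]
      rw [this]
      have h1 : ⟪A x, x⟫ = ⟪S x, S x⟫ := by
        rw [← inner_conj_symm, hinner, inner_conj_symm]
      rw [h1, inner_self_eq_norm_sq_to_K, inner_self_eq_norm_sq_to_K]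
      have h2 : ‖S x‖ ^ 2 ≤ ‖x‖ ^ 2 := by nlinarith [hup x, norm_nonneg (S x), norm_nonneg x]
      simpa [← Complex.ofReal_pow] using h2
  have hlower : algebraMap ℝ (H →L[ℂ] H) (κ ^ 2) ≤ A := by
    rw [← sub_nonneg, ContinuousLinearMap.nonneg_iff_isPositive]
    constructor
    · have hsa2 : IsSelfAdjoint (algebraMap ℝ (H →L[ℂ] H) (κ ^ 2)) := by
        rw [Algebra.algebraMap_eq_smul_one]
        exact (IsSelfAdjoint.all _).smul (IsSelfAdjoint.one _)
      exact ContinuousLinearMap.isSelfAdjoint_iff_isSymmetric.mp (hAsa.sub hsa2)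
    · intro x
      rw [ContinuousLinearMap.reApplyInnerSelf_apply]
      have hsm : ⟪(algebraMap ℝ (H →L[ℂ] H) (κ ^ 2)) x, x⟫
          = ((κ ^ 2 : ℝ) : ℂ) * ⟪x, x⟫ := by
        rw [Algebra.algebraMap_eq_smul_one, ContinuousLinearMap.smul_apply,
          ContinuousLinearMap.one_apply, ← algebraMap_smul ℂ (κ ^ 2 : ℝ) x,
          Complex.coe_algebraMap, inner_smul_left, Complex.conj_ofReal]
      have he : ⟪(A - algebraMap ℝ (H →L[ℂ] H) (κ ^ 2)) x, x⟫
          = ⟪A x, x⟫ - ((κ ^ 2 : ℝ) : ℂ) * ⟪x, x⟫ := by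
        rw [ContinuousLinearMap.sub_apply, inner_sub_left, hsm]
      rw [he]
      have h1 : ⟪A x, x⟫ = ⟪S x, S x⟫ := by
        rw [← inner_conj_symm, hinner, inner_conj_symm]
      rw [h1, inner_self_eq_norm_sq_to_K, inner_self_eq_norm_sq_to_K]
      have h2 := hlow x
      simpa [← Complex.ofReal_pow, ← Complex.ofReal_mul] using h2
  have hspec : ∀ t ∈ spectrum ℝ A, κ ^ 2 ≤ t ∧ t ≤ 1 := by
    intro t ht
    exact ⟨(algebraMap_le_iff_le_spectrum (R := ℝ) (a := A) hAsa).mp hlower t ht,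
      (le_algebraMap_iff_spectrum_le (R := ℝ) (a := A) hAsa).mp hupper t ht⟩
  set g : ℝ → ℝ := fun t => (Real.sqrt t)⁻¹ with hgdef
  have hsqrt_pos : ∀ t ∈ spectrum ℝ A, 0 < Real.sqrt t := by
    intro t ht
    exact Real.sqrt_pos.mpr (lt_of_lt_of_le (by positivity) (hspec t ht).1)
  have hg : ContinuousOn g (spectrum ℝ A) := by
    apply ContinuousOn.inv₀ Real.continuous_sqrt.continuousOn
    intro t ht
    exact (hsqrt_pos t ht).ne'
  have hBAB : cfc g A * A * cfc g A = 1 := by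
    have e1 : cfc (fun t => g t * t) A = cfc g A * A := by
      have h := cfc_mul g id A hg (by fun_prop)
      rw [cfc_id ℝ A hAsa] at h
      simpa using h
    rw [← e1, ← cfc_mul (fun t => g t * t) g A (hg.mul continuousOn_id) hg]
    have e2 : cfc (fun t => (fun t => g t * t) t * g t) A = cfc (fun _ : ℝ => (1 : ℝ)) A := by
      apply cfc_congr
      intro t ht
      have h0 : Real.sqrt t * Real.sqrt t = t := Real.mul_self_sqrt
        (le_trans (by positivity) (hspec t ht).1)
      have h1 := (hsqrt_pos t ht).ne'
      show (Real.sqrt t)⁻¹ * t * (Real.sqrt t)⁻¹ = 1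
      field_simp
      try linarith [h0]
    rw [e2, cfc_const_one ℝ A]
  set V : H →L[ℂ] H := S * cfc g A with hV
  have hBsa : IsSelfAdjoint (cfc g A) := cfc_predicate g A
  have hViso : ∀ x : H, ‖V x‖ = ‖x‖ := by
    intro x
    have hBmove : ∀ w z : H, ⟪cfc g A w, z⟫ = ⟪w, cfc g A z⟫ := fun w z =>
      (ContinuousLinearMap.isSelfAdjoint_iff_isSymmetric.mp hBsa) w z
    have h1 : ⟪V x, V x⟫ = ⟪x, x⟫ := by
      rw [hV, ContinuousLinearMap.mul_apply, ← hinner (cfc g A x), hBmove,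
        show cfc g A (A (cfc g A x)) = (cfc g A * A * cfc g A) x from rfl, hBAB, ContinuousLinearMap.one_apply]
    rw [inner_self_eq_norm_sq_to_K, inner_self_eq_norm_sq_to_K] at h1
    have h2 : ‖V x‖ ^ 2 = ‖x‖ ^ 2 := by exact_mod_cast h1
    calc ‖V x‖ = Real.sqrt (‖V x‖ ^ 2) := (Real.sqrt_sq (norm_nonneg _)).symm
      _ = Real.sqrt (‖x‖ ^ 2) := by rw [h2]
      _ = ‖x‖ := Real.sqrt_sq (norm_nonneg _)
  have h1κ : (1 : ℝ) ≤ κ⁻¹ := by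
    nlinarith [mul_inv_cancel₀ (ne_of_gt hκ), inv_nonneg.mpr hκ.le]
  have hno : ‖S - V‖ ≤ κ⁻¹ - 1 := by
    have h1 : S - V = S * (1 - cfc g A) := by rw [mul_sub, mul_one, hV]
    rw [h1]
    have hS1 : ‖S‖ ≤ 1 := opNorm_le_bound S zero_le_one fun x => by simpa using hup x
    have h2 : ‖(1 : H →L[ℂ] H) - cfc g A‖ ≤ κ⁻¹ - 1 := by
      have e3 : cfc (fun t : ℝ => 1 - g t) A = (1 : H →L[ℂ] H) - cfc g A := by
        rw [cfc_sub (fun _ : ℝ => (1:ℝ)) g A (by fun_prop) hg, cfc_const_one ℝ A]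
      rw [← e3]
      apply norm_cfc_le (by linarith)
      intro t ht
      have h4 : κ ≤ Real.sqrt t := by
        have := Real.sqrt_le_sqrt (hspec t ht).1
        rwa [Real.sqrt_sq hκ.le] at this
      have h5 : Real.sqrt t ≤ 1 := by
        rw [show (1:ℝ) = Real.sqrt 1 by simp]
        exact Real.sqrt_le_sqrt (hspec t ht).2
      have h6 : (1 : ℝ) ≤ g t := by
        rw [hgdef]
        simpa using inv_anti₀ (hsqrt_pos t ht) h5
      have h7 : g t ≤ κ⁻¹ := by
        rw [hgdef]
        exact inv_anti₀ hκ h4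
      rw [Real.norm_eq_abs, abs_sub_comm, abs_of_nonneg (by linarith)]
      linarith
    calc ‖S * ((1 : H →L[ℂ] H) - cfc g A)‖ ≤ ‖S‖ * ‖(1 : H →L[ℂ] H) - cfc g A‖ := norm_mul_le _ _
      _ ≤ 1 * (κ⁻¹ - 1) := by
          apply mul_le_mul hS1 h2 (norm_nonneg _) zero_le_one
      _ = κ⁻¹ - 1 := one_mul _
  refine le_trans (Metric.infDist_le_dist_of_mem (by exact hViso : V ∈ isoms H)) ?_
  rw [dist_eq_norm]
  exact hno


end AuxLemmas

/-- If `ε̂(Tₙ) → 0` for nonzero `Tₙ`, then `dist(Tₙ/‖Tₙ‖, 𝒱) → 0`. -/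
theorem distV_tendsto_zero (hdim : 2 ≤ Module.rank ℂ H)
    (Tn : ℕ → H →L[ℂ] H) (hTn : ∀ n, Tn n ≠ 0)
    (heps : Filter.Tendsto (fun n => epsHat (Tn n)) Filter.atTop (nhds 0)) :
    Filter.Tendsto (fun n => distV ((‖Tn n‖ : ℂ)⁻¹ • Tn n)) Filter.atTop (nhds 0) := by
  have hnn : ∀ n, 0 ≤ epsHat (Tn n) := fun n => epsHat_nonneg _
  set g : ℕ → ℝ := fun n => (Real.sqrt (1 - 9 * epsHat (Tn n)))⁻¹ - 1 with hg
  have hev : ∀ᶠ n in Filter.atTop, epsHat (Tn n) < 1/18 :=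
    heps.eventually_lt_const (by norm_num)
  refine squeeze_zero' (g := g) (Filter.Eventually.of_forall fun n => Metric.infDist_nonneg) ?_ ?_
  · -- eventually distV ≤ g n
    filter_upwards [hev] with n hn
    set T := Tn n with hT
    set ε := epsHat T with hε
    have hε0 : 0 ≤ ε := hnn n
    have hAOP : IsAOP T ε := isAOP_epsHat T
    have hM : (0:ℝ) < ‖T‖ := norm_pos_iff.mpr (hTn n)
    set S : H →L[ℂ] H := (‖T‖ : ℂ)⁻¹ • T with hS
    have hSx : ∀ x : H, ‖S x‖ = ‖T‖⁻¹ * ‖T x‖ := by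
      intro x
      rw [hS, ContinuousLinearMap.smul_apply, norm_smul, norm_inv, Complex.norm_real,
        Real.norm_eq_abs, abs_of_nonneg hM.le]
    have hup : ∀ x : H, ‖S x‖ ≤ ‖x‖ := by
      intro x
      rw [hSx]
      have := T.le_opNorm x
      rw [inv_mul_le_iff₀ hM]
      linarith
    have h9 : (0:ℝ) < 1 - 9 * ε := by linarith [hn]
    set κ : ℝ := Real.sqrt (1 - 9 * ε) with hκdef
    have hκpos : 0 < κ := Real.sqrt_pos.mpr h9
    have hκ1 : κ ≤ 1 := Real.sqrt_le_one.mpr (by linarith)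
    have hκsq : κ ^ 2 = 1 - 9 * ε := Real.sq_sqrt h9.le
    have hlow : ∀ x : H, κ ^ 2 * ‖x‖ ^ 2 ≤ ‖S x‖ ^ 2 := by
      intro x
      have h1 := low_all T ε hAOP hε0 x
      have h2 : ‖S x‖ ^ 2 = ‖T‖⁻¹ ^ 2 * ‖T x‖ ^ 2 := by rw [hSx, mul_pow]
      rw [h2, hκsq]
      have h3 : ‖T‖⁻¹ ^ 2 * ((1 - 9 * ε) * ‖T‖ ^ 2 * ‖x‖ ^ 2) ≤ ‖T‖⁻¹ ^ 2 * ‖T x‖ ^ 2 :=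
        mul_le_mul_of_nonneg_left h1 (by positivity)
      have h4 : ‖T‖⁻¹ ^ 2 * ((1 - 9 * ε) * ‖T‖ ^ 2 * ‖x‖ ^ 2)
          = (1 - 9 * ε) * ‖x‖ ^ 2 := by
        field_simp
      linarith [h4 ▸ h3]
    exact dist_le_aux S κ hκpos hκ1 hlow hup
  · -- Tendsto g
    have c1 : ContinuousAt (fun t : ℝ => (Real.sqrt (1 - 9 * t))⁻¹ - 1) 0 := by
      have h1 : ContinuousAt (fun t : ℝ => Real.sqrt (1 - 9 * t)) 0 :=
        (Real.continuous_sqrt.comp (by continuity)).continuousAt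
      have h2 : ContinuousAt (fun t : ℝ => (Real.sqrt (1 - 9 * t))⁻¹) 0 := by
        apply h1.inv₀
        simp
      exact h2.sub continuousAt_const
    have := (c1.tendsto).comp heps
    simpa [Function.comp_def, hg] using this
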